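/- For every finite tree T, the number k(T) of distinct status values among the vertices of T satisfies k(T) ≥ ⌈(diam(T) + 1)/2⌉, where diam(T) is the diameter of T. -/

import Mathlib

/-- The status (transmission index) of a vertex: the sum of distances to all vertices. -/
noncomputable def SimpleGraph.status {V : Type*} [Fintype V] (G : SimpleGraph V) (v : V) : ℕ :=
  ∑ u : V, G.dist v u

/-- `k(G)`: the number of distinct status values among the vertices of `G`. -/
noncomputable def SimpleGraph.numStatusValues {V : Type*} [Fintype V] (G : SimpleGraph V) : ℕ :=
  (Finset.univ.image G.status).card

open Finset SimpleGraph Walk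

section Aux
variable {V : Type*} {G : SimpleGraph V}

/-- The unique path between two vertices of a tree. -/
noncomputable def treePath (hT : G.IsTree) (u v : V) : G.Walk u v :=
  (hT.existsUnique_path u v).exists.choose

lemma treePath_isPath (hT : G.IsTree) (u v : V) : (treePath hT u v).IsPath :=
  (hT.existsUnique_path u v).exists.choose_spec

lemma treePath_unique (hT : G.IsTree) {u v : V} {p : G.Walk u v} (hp : p.IsPath) :
    p = treePath hT u v := by
  obtain ⟨q, hq, hun⟩ := hT.existsUnique_path u v
  rw [hun p hp, hun _ (treePath_isPath hT u v)]

lemma treePath_self (hT : G.IsTree) (v : V) : treePath hT v v = Walk.nil :=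
  (treePath_unique hT Walk.IsPath.nil).symm

lemma treePath_adj (hT : G.IsTree) {u v : V} (h : G.Adj u v) :
    treePath hT u v = Walk.cons h Walk.nil :=
  (treePath_unique hT (by simp [Walk.isPath_def, h.ne])).symm

lemma treePath_length (hT : G.IsTree) (u v : V) :
    (treePath hT u v).length = G.dist u v := by
  classical
  obtain ⟨p, hp⟩ := hT.isConnected.exists_walk_length_eq_dist u v
  have hb : p.bypass = treePath hT u v := treePath_unique hT p.bypass_isPath
  have h1 : (treePath hT u v).length ≤ G.dist u v := by
    rw [← hb, ← hp]; exact p.length_bypass_le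
  exact (le_antisymm (SimpleGraph.dist_le _) h1).symm

/-- If the tree-path from `x` to `v` uses the edge `uv`, then `x` is on `u`'s side. -/
lemma dist_of_edge_mem (hT : G.IsTree) {u v x : V} (h : G.Adj u v)
    (he : s(u, v) ∈ (treePath hT x v).edges) : G.dist x v = G.dist x u + 1 := by
  classical
  set p := treePath hT x v with hpdef
  have hu : u ∈ p.support := p.fst_mem_support_of_mem_edges he
  have hq2 : (p.dropUntil u hu) = Walk.cons h Walk.nil := by
    rw [treePath_unique hT ((treePath_isPath hT x v).dropUntil hu), treePath_adj hT h]
  have hlen := congrArg Walk.length (p.take_spec hu)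
  rw [Walk.length_append, hq2] at hlen
  have hq1 : (p.takeUntil u hu).length = G.dist x u := by
    rw [treePath_unique hT ((treePath_isPath hT x v).takeUntil hu), treePath_length]
  rw [← treePath_length hT x v, ← hpdef, ← hlen, hq1]
  simp

lemma edge_not_mem_support (hT : G.IsTree) {u v x : V} (h : G.Adj u v)
    (he : s(u, v) ∉ (treePath hT x v).edges) : u ∉ (treePath hT x v).support := by
  classical
  intro hu
  apply he
  apply (treePath hT x v).edges_dropUntil_subset hu
  have hq2 : ((treePath hT x v).dropUntil u hu) = Walk.cons h Walk.nil := by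
    rw [treePath_unique hT ((treePath_isPath hT x v).dropUntil hu), treePath_adj hT h]
  rw [hq2]
  simp

/-- If the tree-path from `x` to `v` avoids the edge `uv`, then `x` is on `v`'s side. -/
lemma dist_of_edge_not_mem (hT : G.IsTree) {u v x : V} (h : G.Adj u v)
    (he : s(u, v) ∉ (treePath hT x v).edges) : G.dist x u = G.dist x v + 1 := by
  have hu : u ∉ (treePath hT x v).support := edge_not_mem_support hT h he
  have hp' : ((treePath hT x v).concat h.symm).IsPath := by
    rw [Walk.isPath_def, Walk.support_concat, List.nodup_append]
    refine ⟨(treePath_isPath hT x v).support_nodup, List.nodup_singleton _, ?_⟩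
    intro a ha b hb hab
    rw [List.mem_singleton] at hb
    exact hu (hb ▸ hab ▸ ha)
  have hun := treePath_unique hT hp'
  rw [← treePath_length hT x u, ← hun, Walk.length_concat, treePath_length]

/-- Monotonicity of sides along a path: if the path from `x` to `v₁` uses edge `v₀v₁`,
then the path from `x` to `v₂` uses edge `v₁v₂`. -/
lemma edge_mem_next (hT : G.IsTree) {v0 v1 v2 x : V} (h01 : G.Adj v0 v1) (h12 : G.Adj v1 v2)
    (h02 : v0 ≠ v2) (he : s(v0, v1) ∈ (treePath hT x v1).edges) :
    s(v1, v2) ∈ (treePath hT x v2).edges := by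
  classical
  set p := treePath hT x v1 with hpdef
  have hv2 : v2 ∉ p.support := by
    intro hv2
    have hr : p.dropUntil v2 hv2 = Walk.cons h12.symm Walk.nil := by
      rw [treePath_unique hT ((treePath_isPath hT x v1).dropUntil hv2),
        treePath_adj hT h12.symm]
    have hnodup : p.support.Nodup := (treePath_isPath hT x v1).support_nodup
    rw [← p.take_spec hv2, Walk.support_append, List.nodup_append] at hnodup
    have heds : p.edges = (p.takeUntil v2 hv2).edges ++ (p.dropUntil v2 hv2).edges := by
      rw [← Walk.edges_append, p.take_spec hv2]
    rw [heds, List.mem_append] at he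
    rcases he with he | he
    · have h1 : v1 ∈ (p.takeUntil v2 hv2).support := Walk.snd_mem_support_of_mem_edges _ he
      have h2 : v1 ∈ (p.dropUntil v2 hv2).support.tail := by
        rw [hr]; simp
      exact hnodup.2.2 _ h1 _ h2 rfl
    · rw [hr] at he
      simp only [Walk.edges_cons, Walk.edges_nil, List.mem_singleton] at he
      rw [Sym2.eq_iff] at he
      rcases he with ⟨rfl, -⟩ | ⟨rfl, rfl⟩
      · exact h02 rfl
      · exact G.irrefl h01
  have hp' : (p.concat h12).IsPath := by
    rw [Walk.isPath_def, Walk.support_concat, List.nodup_append]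
    refine ⟨(treePath_isPath hT x v1).support_nodup, List.nodup_singleton _, ?_⟩
    intro a ha b hb hab
    rw [List.mem_singleton] at hb
    exact hv2 (hb ▸ hab ▸ ha)
  rw [← treePath_unique hT hp', Walk.edges_concat]
  simp

lemma getVert_ne_of_isPath {u v : V} {p : G.Walk u v} (hp : p.IsPath) :
    ∀ i j : ℕ, i < j → j ≤ p.length → p.getVert i ≠ p.getVert j := by
  induction p with
  | nil => intro i j hij hj; simp only [Walk.length_nil] at hj; omega
  | cons h q ih =>
    intro i j hij hj
    rw [Walk.length_cons] at hj
    match i, j with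
    | 0, (j+1) =>
      rw [Walk.getVert_zero, Walk.getVert_cons_succ]
      intro heq
      have hmem : q.getVert j ∈ q.support :=
        Walk.mem_support_iff_exists_getVert.2 ⟨j, rfl, by omega⟩
      exact ((Walk.cons_isPath_iff h q).1 hp).2 (heq ▸ hmem)
    | (i+1), (j+1) =>
      rw [Walk.getVert_cons_succ, Walk.getVert_cons_succ]
      exact ih hp.of_cons i j (by omega) (by omega)

end Aux

/-- For every finite tree `T`, the number of distinct status values satisfies
`k(T) ≥ ⌈(diam T + 1)/2⌉`.  (In natural number arithmetic, `⌈(d+1)/2⌉ = (d+2)/2`.) -/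
theorem numStatusValues_ge_ceil_diam {V : Type*} [Fintype V]
    (G : SimpleGraph V) (hT : G.IsTree) :
    (G.diam + 2) / 2 ≤ G.numStatusValues := by
  classical
  have hne : Nonempty V := hT.isConnected.nonempty
  obtain ⟨x, y, hxy⟩ := G.exists_dist_eq_diam
  set d := G.diam with hd
  set p := treePath hT x y with hp
  have hplen : p.length = d := by rw [hp, treePath_length, hxy]
  have hppath : p.IsPath := treePath_isPath hT x y
  set v : ℕ → V := fun i => p.getVert i with hv
  have hadj : ∀ i, i < d → G.Adj (v i) (v (i + 1)) := fun i hi =>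
    p.adj_getVert_succ (by omega)
  set n := Fintype.card V with hn
  set D : ℕ → Finset V := fun i =>
    univ.filter (fun z => s(v i, v (i + 1)) ∈ (treePath hT z (v (i + 1))).edges) with hD
  set t : ℕ → ℤ := fun i => (G.status (v i) : ℤ) with ht
  -- status difference formula
  have hdiff : ∀ i, i < d → t (i + 1) - t i = 2 * ((D i).card : ℤ) - n := by
    intro i hi
    have hadji := hadj i hi
    have key : ∀ z : V, (G.dist (v (i+1)) z : ℤ) - G.dist (v i) z =
        if s(v i, v (i + 1)) ∈ (treePath hT z (v (i + 1))).edges then 1 else -1 := by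
      intro z
      by_cases hz : s(v i, v (i + 1)) ∈ (treePath hT z (v (i + 1))).edges
      · have hzz := dist_of_edge_mem hT hadji hz
        rw [if_pos hz, @SimpleGraph.dist_comm V G (v (i+1)) z, @SimpleGraph.dist_comm V G (v i) z, hzz]
        push_cast; ring
      · have hzz := dist_of_edge_not_mem hT hadji hz
        rw [if_neg hz, @SimpleGraph.dist_comm V G (v (i+1)) z, @SimpleGraph.dist_comm V G (v i) z, hzz]
        push_cast; ring
    have hsum : t (i + 1) - t i = ∑ z : V, ((G.dist (v (i+1)) z : ℤ) - G.dist (v i) z) := by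
      rw [ht]; simp only [SimpleGraph.status]
      push_cast
      rw [Finset.sum_sub_distrib]
    rw [hsum, Finset.sum_congr rfl (fun z _ => key z), Finset.sum_ite]
    simp only [Finset.sum_const, nsmul_eq_mul, mul_one, mul_neg_one]
    have hc := Finset.card_filter_add_card_filter_not
      (s := (univ : Finset V))
      (p := fun z => s(v i, v (i + 1)) ∈ (treePath hT z (v (i + 1))).edges)
    rw [Finset.card_univ, ← hn] at hc
    rw [hD]
    push_cast [← hc]
    ring
  -- strict monotonicity of side sizes
  have hmono : ∀ i, i + 1 < d → (D i).card < (D (i+1)).card := by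
    intro i hi
    have hsub : D i ⊆ D (i + 1) := by
      intro z hz
      rw [hD, Finset.mem_filter] at hz ⊢
      refine ⟨Finset.mem_univ _, ?_⟩
      exact edge_mem_next hT (hadj i (by omega)) (hadj (i+1) hi)
        (by
          have := getVert_ne_of_isPath hppath i (i+2) (by omega) (by omega)
          simpa [hv] using this) hz.2
    have h1 : v (i+1) ∈ D (i+1) := by
      rw [hD, Finset.mem_filter]
      refine ⟨Finset.mem_univ _, ?_⟩
      rw [treePath_adj hT (hadj (i+1) hi)]
      simp
    have h2 : v (i+1) ∉ D i := by
      rw [hD, Finset.mem_filter]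
      rintro ⟨-, hmem⟩
      rw [treePath_self hT] at hmem
      simp at hmem
    exact Finset.card_lt_card ((Finset.ssubset_iff_of_subset hsub).2 ⟨v (i+1), h1, h2⟩)
  set δ : ℕ → ℤ := fun i => 2 * ((D i).card : ℤ) - n with hδ
  have hδmono : ∀ i j, i < j → j < d → δ i < δ j := by
    intro i j hij hjd
    induction j with
    | zero => omega
    | succ j ih =>
      have hstep : δ j < δ (j+1) := by
        have hmm := hmono j (by omega)
        rw [hδ]
        simp only
        omega
      rcases Nat.lt_or_ge i j with h | h
      · exact lt_trans (ih h (by omega)) hstep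
      · have : i = j := by omega
        subst this; exact hstep
  -- telescoping
  have htel : ∀ i j, i ≤ j → j ≤ d → t j - t i = ∑ l ∈ Finset.Ico i j, δ l := by
    intro i j hij hjd
    induction j with
    | zero =>
      have : i = 0 := by omega
      subst this; simp
    | succ j ih =>
      rcases Nat.lt_or_ge j i with h | h
      · have : i = j + 1 := by omega
        subst this; simp
      · rw [Finset.sum_Ico_succ_top h, ← ih h (by omega)]
        have hdd := hdiff j (by omega)
        rw [hδ]
        simp only
        omega
  -- no value is attained three times along the path
  have htriple : ∀ i j k : ℕ, i < j → j < k → k ≤ d → t i = t j → t j = t k → False := by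
    intro i j k hij hjk hkd e1 e2
    have s1 : ∑ l ∈ Finset.Ico i j, δ l = 0 := by
      have := htel i j (le_of_lt hij) (by omega)
      omega
    have s2 : ∑ l ∈ Finset.Ico j k, δ l = 0 := by
      have := htel j k (le_of_lt hjk) hkd
      omega
    have hex : ∃ l ∈ Finset.Ico i j, 0 ≤ δ l := by
      by_contra hcon
      push_neg at hcon
      have hneg : ∑ l ∈ Finset.Ico i j, δ l < 0 :=
        Finset.sum_neg hcon (Finset.nonempty_Ico.2 hij)
      omega
    obtain ⟨l, hl, hl0⟩ := hex
    rw [Finset.mem_Ico] at hl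
    have hpos : ∀ m ∈ Finset.Ico j k, 0 < δ m := by
      intro m hm
      rw [Finset.mem_Ico] at hm
      have h1 : δ l < δ m := hδmono l m (by omega) (by omega)
      omega
    have hgt : 0 < ∑ l ∈ Finset.Ico j k, δ l :=
      Finset.sum_pos hpos (Finset.nonempty_Ico.2 hjk)
    omega
  -- each status value occurs at most twice among v 0, ..., v d
  have hfiber : ∀ c : ℕ,
      ((Finset.range (d+1)).filter (fun i => G.status (v i) = c)).card ≤ 2 := by
    intro c
    by_contra hcon
    push_neg at hcon
    obtain ⟨a, ha, b, hb, e, hee, hab, hae, hbe⟩ := Finset.two_lt_card.1 hcon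
    have hmem : ∀ z, z ∈ (Finset.range (d+1)).filter (fun i => G.status (v i) = c) →
        z ≤ d ∧ t z = (c : ℤ) := by
      intro z hz
      rw [Finset.mem_filter, Finset.mem_range] at hz
      exact ⟨by omega, by rw [ht]; simp only; rw [hz.2]⟩
    obtain ⟨had, hat⟩ := hmem a ha
    obtain ⟨hbd, hbt⟩ := hmem b hb
    obtain ⟨hed, het⟩ := hmem e hee
    have heq : ∀ z w : ℕ, t z = (c:ℤ) → t w = (c:ℤ) → t z = t w := by
      intro z w h1 h2; rw [h1, h2]
    rcases lt_trichotomy a b with h1 | h1 | h1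
    · rcases lt_trichotomy b e with h2 | h2 | h2
      · exact htriple a b e h1 h2 hed (heq _ _ hat hbt) (heq _ _ hbt het)
      · exact hbe h2
      · rcases lt_trichotomy a e with h3 | h3 | h3
        · exact htriple a e b h3 h2 hbd (heq _ _ hat het) (heq _ _ het hbt)
        · exact hae h3
        · exact htriple e a b h3 h1 hbd (heq _ _ het hat) (heq _ _ hat hbt)
    · exact hab h1
    · rcases lt_trichotomy a e with h2 | h2 | h2
      · exact htriple b a e h1 h2 hed (heq _ _ hbt hat) (heq _ _ hat het)
      · exact hae h2
      · rcases lt_trichotomy b e with h3 | h3 | h3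
        · exact htriple b e a h3 h2 had (heq _ _ hbt het) (heq _ _ het hat)
        · exact hbe h3
        · exact htriple e b a h3 h1 had (heq _ _ het hbt) (heq _ _ hbt hat)
  have hcount : d + 1 ≤ 2 * ((Finset.range (d+1)).image (fun i => G.status (v i))).card := by
    have := Finset.card_le_mul_card_image (f := fun i => G.status (v i))
      (Finset.range (d+1)) 2 (fun c _ => hfiber c)
    simpa using this
  have hsub : (Finset.range (d+1)).image (fun i => G.status (v i)) ⊆
      Finset.univ.image G.status := by
    intro c hc
    rw [Finset.mem_image] at hc ⊢
    obtain ⟨i, -, rfl⟩ := hc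
    exact ⟨v i, Finset.mem_univ _, rfl⟩
  have hle := Finset.card_le_card hsub
  have hNSV : G.numStatusValues = (Finset.univ.image G.status).card := rfl
  omega
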